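/- Let r > 0 and define A(α) on [0,1] by: A(α) = π r² / √(1-α²) for 0 ≤ α ≤ 1/√(1+4r²); A(α) = (r/α)·√(1 - (1-α²)/(4α²r²)) + (2r²/√(1-α²))·arcsin(√(1-α²)/(2αr)) for 1/√(1+4r²) < α < 1; A(1) = 2r. Then A(α) equals the 2-dimensional volume of the intersection of the cylinder Z = [-1/2, 1/2] × r·B₂² ⊂ ℝ³ with the hyperplane through the origin orthogonal to (√(1-α²), α, 0). -/

import Mathlib

open MeasureTheory

lemma volume_sq_le (c : ℝ) :
    volume {t : ℝ | t^2 ≤ c} = ENNReal.ofReal (2 * Real.sqrt c) := by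
  rcases le_or_gt 0 c with hc | hc
  · have hset : {t : ℝ | t^2 ≤ c} = Set.Icc (-Real.sqrt c) (Real.sqrt c) := by
      ext t
      simp only [Set.mem_setOf_eq, Set.mem_Icc]
      constructor
      · intro h
        have h1 : |t| ≤ Real.sqrt c := by
          rw [← Real.sqrt_sq_eq_abs]; exact Real.sqrt_le_sqrt h
        exact abs_le.mp h1
      · rintro ⟨h1, h2⟩
        have := abs_le.mpr ⟨h1, h2⟩
        nlinarith [Real.sq_sqrt hc, sq_abs t, abs_nonneg t, Real.sqrt_nonneg c]
    rw [hset, Real.volume_Icc]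
    congr 1; ring
  · have hset : {t : ℝ | t^2 ≤ c} = (∅ : Set ℝ) := by
      ext t; simp only [Set.mem_setOf_eq, Set.mem_empty_iff_false, iff_false]; nlinarith [sq_nonneg t]
    rw [hset, measure_empty, Real.sqrt_eq_zero_of_nonpos hc.le]
    simp

lemma hasDerivAt_H (k c : ℝ) (hk : 0 < k) (hc : 0 < c) {x : ℝ} (hx : k * |x| < c) :
    HasDerivAt (fun s => s * Real.sqrt (c^2 - (k*s)^2) + c^2 / k * Real.arcsin (k * s / c))
      (2 * Real.sqrt (c^2 - (k*x)^2)) x := by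
  have habs : 0 ≤ k * |x| := mul_nonneg hk.le (abs_nonneg x)
  have hq : 0 < c^2 - (k*x)^2 := by
    have h2 : (k*x)^2 = (k*|x|)^2 := by rw [mul_pow, mul_pow, sq_abs]
    nlinarith [mul_pos (sub_pos.mpr hx) (by positivity : (0:ℝ) < c + k*|x|)]
  set w := Real.sqrt (c^2 - (k*x)^2) with hw
  have hwpos : 0 < w := Real.sqrt_pos.mpr hq
  have hw2 : w^2 = c^2 - (k*x)^2 := Real.sq_sqrt hq.le
  have hl : HasDerivAt (fun s : ℝ => k * s) k x := by
    simpa using (hasDerivAt_id x).const_mul k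
  have h1 : HasDerivAt (fun s : ℝ => c^2 - (k*s)^2) (-(2 * k^2 * x)) x := by
    have h0 := (hl.pow 2).const_sub (c^2)
    exact h0.congr_deriv (by push_cast; ring)
  have hsq : HasDerivAt (fun s : ℝ => Real.sqrt (c^2 - (k*s)^2)) (-(2 * k^2 * x) / (2 * w)) x :=
    h1.sqrt hq.ne'
  have h2 : HasDerivAt (fun s : ℝ => s * Real.sqrt (c^2 - (k*s)^2))
      (1 * w + x * (-(2 * k^2 * x) / (2 * w))) x := by
    exact (hasDerivAt_id' x).mul hsq
  have hlt : |k * x / c| < 1 := by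
    rw [abs_div, abs_of_pos hc, div_lt_one hc, abs_mul, abs_of_pos hk]; exact hx
  have hne1 : k * x / c ≠ -1 := by intro h; rw [h] at hlt; norm_num at hlt
  have hne2 : k * x / c ≠ 1 := by intro h; rw [h] at hlt; norm_num at hlt
  have hlin : HasDerivAt (fun s : ℝ => k * s / c) (k / c) x := hl.div_const c
  have h3 : HasDerivAt (fun s : ℝ => Real.arcsin (k * s / c))
      (1 / Real.sqrt (1 - (k*x/c)^2) * (k / c)) x :=
    by have := (Real.hasDerivAt_arcsin hne1 hne2).comp x hlin; exact this
  have h4 := h2.add (h3.const_mul (c^2 / k))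
  have harg : 1 - (k*x/c)^2 = (c^2 - (k*x)^2) / c^2 := by field_simp
  have hs : Real.sqrt (1 - (k*x/c)^2) = w / c := by
    rw [harg, Real.sqrt_div hq.le, Real.sqrt_sq hc.le]
  rw [hs] at h4
  refine h4.congr_deriv ?_
  symm
  field_simp
  linear_combination hw2

lemma integral_key (k c b : ℝ) (hk : 0 < k) (hc : 0 < c) (hb : 0 ≤ b) (hbc : k * b ≤ c) :
    ∫ s in (-b)..b, 2 * Real.sqrt (c^2 - (k*s)^2)
      = 2 * b * Real.sqrt (c^2 - (k*b)^2) + 2 * (c^2 / k) * Real.arcsin (k * b / c) := by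
  have hcont : Continuous fun s : ℝ => 2 * Real.sqrt (c^2 - (k*s)^2) := by
    apply Continuous.mul continuous_const
    exact Real.continuous_sqrt.comp (by continuity)
  have hHcont : ContinuousOn
      (fun s => s * Real.sqrt (c^2 - (k*s)^2) + c^2 / k * Real.arcsin (k * s / c))
      (Set.Icc (-b) b) := by
    apply Continuous.continuousOn
    apply Continuous.add
    · exact continuous_id.mul (Real.continuous_sqrt.comp (by continuity))
    · exact continuous_const.mul (Real.continuous_arcsin.comp (by continuity))
  have hderiv : ∀ x ∈ Set.Ioo (-b) b,
      HasDerivWithinAt (fun s => s * Real.sqrt (c^2 - (k*s)^2) + c^2 / k * Real.arcsin (k * s / c))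
        (2 * Real.sqrt (c^2 - (k*x)^2)) (Set.Ioi x) x := by
    intro x hx
    have habs : |x| < b := abs_lt.mpr ⟨hx.1, hx.2⟩
    have : k * |x| < c := lt_of_lt_of_le (by nlinarith) hbc
    exact (hasDerivAt_H k c hk hc this).hasDerivWithinAt
  have key := intervalIntegral.integral_eq_sub_of_hasDeriv_right_of_le (neg_le_self hb)
    hHcont hderiv (hcont.intervalIntegrable _ _)
  rw [key]
  have hneg : k * -b / c = -(k * b / c) := by ring
  rw [hneg, Real.arcsin_neg]
  have hsq : (k * -b)^2 = (k*b)^2 := by ring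
  rw [hsq]
  ring

noncomputable def psiMap (α β : ℝ) (hαβ : α^2 + β^2 = 1) :
    EuclideanSpace ℝ (Fin 2) →ₗᵢ[ℝ] EuclideanSpace ℝ (Fin 3) where
  toLinearMap :=
  { toFun := fun p => (WithLp.equiv 2 (Fin 3 → ℝ)).symm ![α * p 0, -(β * p 0), p 1]
    map_add' := fun p q => by
      ext i
      fin_cases i <;>
        simp [WithLp.equiv_symm_apply, PiLp.toLp_apply, PiLp.add_apply] <;> ring
    map_smul' := fun c p => by
      ext i
      fin_cases i <;>
        simp [WithLp.equiv_symm_apply, PiLp.toLp_apply, PiLp.smul_apply, smul_eq_mul] <;> ring }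
  norm_map' := fun p => by
    simp only [LinearMap.coe_mk, AddHom.coe_mk]
    rw [EuclideanSpace.norm_eq, EuclideanSpace.norm_eq]
    rw [Fin.sum_univ_three, Fin.sum_univ_two]
    simp only [WithLp.equiv_symm_apply, PiLp.toLp_apply, Matrix.cons_val_zero, Matrix.cons_val_one,
      Matrix.head_cons, Matrix.cons_val_two, Matrix.tail_cons]
    congr 1
    simp only [Real.norm_eq_abs, sq_abs, neg_sq]
    linear_combination (p 0)^2 * hαβ

lemma psiMap_range (α β : ℝ) (hαβ : α^2 + β^2 = 1) :
    Set.range (psiMap α β hαβ) =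
      {x : EuclideanSpace ℝ (Fin 3) | β * x 0 + α * x 1 = 0} := by
  ext x
  constructor
  · rintro ⟨p, rfl⟩
    show β * _ + α * _ = 0
    simp [psiMap, WithLp.equiv_symm_apply, PiLp.toLp_apply]
    ring
  · intro hx
    have hx' : β * x 0 + α * x 1 = 0 := hx
    refine ⟨(WithLp.equiv 2 (Fin 2 → ℝ)).symm ![α * x 0 - β * x 1, x 2], ?_⟩
    ext i
    fin_cases i <;>
      simp [psiMap, WithLp.equiv_symm_apply, PiLp.toLp_apply]
    · linear_combination (-β) * hx' + (x 0) * hαβ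
    · linear_combination (-α) * hx' + (x 1) * hαβ

lemma psiMap_apply (α β : ℝ) (hαβ : α^2 + β^2 = 1) (p : EuclideanSpace ℝ (Fin 2)) :
    psiMap α β hαβ p = (WithLp.equiv 2 (Fin 3 → ℝ)).symm ![α * p 0, -(β * p 0), p 1] := rfl


theorem reduction (r α β : ℝ) (hαβ : α^2 + β^2 = 1)
    (φ : EuclideanSpace ℝ (Fin 2) →ₗᵢ[ℝ] EuclideanSpace ℝ (Fin 3))
    (hφ : Set.range φ =
      {x : EuclideanSpace ℝ (Fin 3) | β * x 0 + α * x 1 = 0}) :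
    volume (φ ⁻¹'
        {x : EuclideanSpace ℝ (Fin 3) |
          x 0 ∈ Set.Icc (-(1:ℝ)/2) (1/2) ∧ (x 1)^2 + (x 2)^2 ≤ r^2}) =
      volume {q : ℝ × ℝ | α * q.1 ∈ Set.Icc (-(1:ℝ)/2) (1/2) ∧ (β * q.1)^2 + q.2^2 ≤ r^2} := by
  set ψ := psiMap α β hαβ with hψ
  set S3 : Set (EuclideanSpace ℝ (Fin 3)) :=
    {x | x 0 ∈ Set.Icc (-(1:ℝ)/2) (1/2) ∧ (x 1)^2 + (x 2)^2 ≤ r^2} with hS3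
  have hrange : LinearMap.range φ.toLinearMap = LinearMap.range ψ.toLinearMap := by
    apply SetLike.coe_injective
    rw [LinearMap.coe_range, LinearMap.coe_range]
    show Set.range φ = Set.range ψ
    rw [hφ, hψ, psiMap_range]
  let e : EuclideanSpace ℝ (Fin 2) ≃ₗᵢ[ℝ] EuclideanSpace ℝ (Fin 2) :=
    φ.equivRange.trans ((LinearIsometryEquiv.ofEq _ _ hrange).trans ψ.equivRange.symm)
  have hcomp : ∀ p, ψ (e p) = φ p := by
    intro p
    show (ψ (ψ.equivRange.symm (LinearIsometryEquiv.ofEq _ _ hrange (φ.equivRange p))) : _) = φ p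
    have h1 : ∀ y : LinearMap.range ψ.toLinearMap, ψ (ψ.equivRange.symm y) = (y : _) := by
      intro y
      have := ψ.equivRange.apply_symm_apply y
      calc ψ (ψ.equivRange.symm y) = (ψ.equivRange (ψ.equivRange.symm y) : _) := rfl
        _ = (y : _) := by rw [this]
    rw [h1]
    rfl
  have hU : ψ ⁻¹' S3 =
      {p : EuclideanSpace ℝ (Fin 2) |
        α * p 0 ∈ Set.Icc (-(1:ℝ)/2) (1/2) ∧ (β * p 0)^2 + (p 1)^2 ≤ r^2} := by
    ext p
    simp only [Set.mem_preimage, hS3, Set.mem_setOf_eq, psiMap_apply, hψ,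
      WithLp.equiv_symm_apply, PiLp.toLp_apply, Matrix.cons_val_zero, Matrix.cons_val_one, Matrix.head_cons,
      Matrix.cons_val_two, Matrix.tail_cons, neg_sq]
  have hUmeas : MeasurableSet
      {p : EuclideanSpace ℝ (Fin 2) |
        α * p 0 ∈ Set.Icc (-(1:ℝ)/2) (1/2) ∧ (β * p 0)^2 + (p 1)^2 ≤ r^2} := by
    apply IsClosed.measurableSet
    have h0 : Continuous fun p : EuclideanSpace ℝ (Fin 2) => p 0 := (EuclideanSpace.proj 0).continuous
    have h1 : Continuous fun p : EuclideanSpace ℝ (Fin 2) => p 1 := (EuclideanSpace.proj 1).continuous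
    apply IsClosed.inter
    · exact (isClosed_Icc).preimage (continuous_const.mul h0)
    · exact isClosed_le (((continuous_const.mul h0).pow 2).add (h1.pow 2)) continuous_const
  have step1 : φ ⁻¹' S3 = e ⁻¹' (ψ ⁻¹' S3) := by
    ext p
    simp only [Set.mem_preimage]
    rw [← hcomp p]
  rw [step1, (e.measurePreserving).measure_preimage (by rw [hU]; exact hUmeas.nullMeasurableSet)]
  -- transfer to ℝ × ℝ
  have mp : MeasurePreserving
      ((MeasurableEquiv.toLp 2 (Fin 2 → ℝ)).symm.trans (MeasurableEquiv.finTwoArrow)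
        : EuclideanSpace ℝ (Fin 2) ≃ᵐ (ℝ × ℝ)) volume volume :=
    (volume_preserving_finTwoArrow ℝ).comp (EuclideanSpace.volume_preserving_symm_measurableEquiv_toLp (Fin 2))
  have hT : ψ ⁻¹' S3 =
      ((MeasurableEquiv.toLp 2 (Fin 2 → ℝ)).symm.trans (MeasurableEquiv.finTwoArrow)) ⁻¹'
        {q : ℝ × ℝ | α * q.1 ∈ Set.Icc (-(1:ℝ)/2) (1/2) ∧ (β * q.1)^2 + q.2^2 ≤ r^2} := by
    rw [hU]; rfl
  rw [hT, mp.measure_preimage]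
  apply (IsClosed.measurableSet ?_).nullMeasurableSet
  apply IsClosed.inter
  · exact (isClosed_Icc).preimage (continuous_const.mul continuous_fst)
  · exact isClosed_le (((continuous_const.mul continuous_fst).pow 2).add (continuous_snd.pow 2)) continuous_const

lemma volume_T (r α β : ℝ) :
    volume {q : ℝ × ℝ | α * q.1 ∈ Set.Icc (-(1:ℝ)/2) (1/2) ∧ (β * q.1)^2 + q.2^2 ≤ r^2}
      = ∫⁻ s in {s : ℝ | α * s ∈ Set.Icc (-(1:ℝ)/2) (1/2)},
          ENNReal.ofReal (2 * Real.sqrt (r^2 - (β*s)^2)) := by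
  set T : Set (ℝ × ℝ) :=
    {q | α * q.1 ∈ Set.Icc (-(1:ℝ)/2) (1/2) ∧ (β * q.1)^2 + q.2^2 ≤ r^2} with hTdef
  set I : Set ℝ := {s | α * s ∈ Set.Icc (-(1:ℝ)/2) (1/2)} with hIdef
  have hImeas : MeasurableSet I :=
    (isClosed_Icc.preimage (continuous_const.mul continuous_id)).measurableSet
  have hTmeas : MeasurableSet T := by
    apply IsClosed.measurableSet
    apply IsClosed.inter
    · exact isClosed_Icc.preimage (continuous_const.mul continuous_fst)
    · exact isClosed_le (((continuous_const.mul continuous_fst).pow 2).add (continuous_snd.pow 2)) continuous_const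
  rw [Measure.volume_eq_prod, Measure.prod_apply hTmeas]
  have hslice : ∀ s : ℝ, volume (Prod.mk s ⁻¹' T)
      = Set.indicator I (fun s => ENNReal.ofReal (2 * Real.sqrt (r^2 - (β*s)^2))) s := by
    intro s
    by_cases hs : s ∈ I
    · have : Prod.mk s ⁻¹' T = {t : ℝ | t^2 ≤ r^2 - (β*s)^2} := by
        ext t
        simp only [Set.mem_preimage, hTdef, Set.mem_setOf_eq]
        constructor
        · rintro ⟨-, h2⟩; linarith
        · intro h; exact ⟨hs, by linarith⟩
      rw [this, volume_sq_le, Set.indicator_of_mem hs]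
    · have : Prod.mk s ⁻¹' T = (∅ : Set ℝ) := by
        ext t
        simp only [Set.mem_preimage, hTdef, Set.mem_setOf_eq, Set.mem_empty_iff_false, iff_false]
        rintro ⟨h1, -⟩; exact hs h1
      rw [this, measure_empty, Set.indicator_of_notMem hs]
  calc ∫⁻ s, volume (Prod.mk s ⁻¹' T)
      = ∫⁻ s, Set.indicator I (fun s => ENNReal.ofReal (2 * Real.sqrt (r^2 - (β*s)^2))) s :=
        lintegral_congr hslice
    _ = ∫⁻ s in I, ENNReal.ofReal (2 * Real.sqrt (r^2 - (β*s)^2)) :=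
        lintegral_indicator hImeas _

lemma lint_to_int (f : ℝ → ℝ) (hf : Continuous f) (hf0 : ∀ s, 0 ≤ f s) (a b : ℝ) (hab : a ≤ b) :
    ∫⁻ s in Set.Icc a b, ENNReal.ofReal (f s) = ENNReal.ofReal (∫ s in a..b, f s) := by
  rw [intervalIntegral.integral_of_le hab, ← MeasureTheory.integral_Icc_eq_integral_Ioc,
    ofReal_integral_eq_lintegral_ofReal (hf.integrableOn_Icc) (ae_of_all _ hf0)]

set_option maxHeartbeats 2000000 in
theorem cylinder_3d_section_area (r α : ℝ) (hr : 0 < r) (hα : α ∈ Set.Icc (0:ℝ) 1)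
    (φ : EuclideanSpace ℝ (Fin 2) →ₗᵢ[ℝ] EuclideanSpace ℝ (Fin 3))
    (hφ : Set.range φ =
      {x : EuclideanSpace ℝ (Fin 3) | Real.sqrt (1 - α^2) * x 0 + α * x 1 = 0}) :
    volume (φ ⁻¹'
        {x : EuclideanSpace ℝ (Fin 3) |
          x 0 ∈ Set.Icc (-(1:ℝ)/2) (1/2) ∧ (x 1)^2 + (x 2)^2 ≤ r^2}) =
      ENNReal.ofReal
        (if α ≤ 1 / Real.sqrt (1 + 4 * r^2) then
          Real.pi * r * (r / Real.sqrt (1 - α^2))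
        else if α < 1 then
          r / α * Real.sqrt (1 - (1 - α^2) / (4 * α^2 * r^2)) +
            2 * r^2 / Real.sqrt (1 - α^2) *
              Real.arcsin (Real.sqrt (1 - α^2) / (2 * α * r))
        else 2 * r) := by
  obtain ⟨hα0, hα1⟩ := hα
  set β := Real.sqrt (1 - α^2) with hβdef
  have hβ0 : 0 ≤ β := Real.sqrt_nonneg _
  have hβ2 : β^2 = 1 - α^2 := Real.sq_sqrt (by nlinarith)
  have hαβ : α^2 + β^2 = 1 := by linarith
  rw [reduction r α β hαβ φ hφ, volume_T r α β]
  set I : Set ℝ := {s | α * s ∈ Set.Icc (-(1:ℝ)/2) (1/2)} with hIdef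
  have hImeas : MeasurableSet I :=
    (isClosed_Icc.preimage (continuous_const.mul continuous_id)).measurableSet
  have hfc : Continuous fun s : ℝ => 2 * Real.sqrt (r^2 - (β*s)^2) :=
    continuous_const.mul (Real.continuous_sqrt.comp (by continuity))
  have hf0 : ∀ s : ℝ, 0 ≤ 2 * Real.sqrt (r^2 - (β*s)^2) :=
    fun s => by positivity
  -- condition translation
  have hu : (0:ℝ) < 1 + 4*r^2 := by positivity
  have hsu : 0 < Real.sqrt (1+4*r^2) := Real.sqrt_pos.mpr hu
  have hsu2 : (Real.sqrt (1+4*r^2))^2 = 1+4*r^2 := Real.sq_sqrt hu.le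
  have hcond : (α ≤ 1 / Real.sqrt (1 + 4 * r^2)) ↔ 4*α^2*r^2 ≤ 1 - α^2 := by
    constructor
    · intro h
      have h' : α * Real.sqrt (1+4*r^2) ≤ 1 := by
        rw [le_div_iff₀ hsu] at h; linarith
      have hge : 0 ≤ α * Real.sqrt (1+4*r^2) := mul_nonneg hα0 hsu.le
      nlinarith [sq_nonneg (α * Real.sqrt (1+4*r^2))]
    · intro h
      rw [le_div_iff₀ hsu]
      nlinarith [sq_nonneg (α * Real.sqrt (1+4*r^2) - 1)]
  split_ifs with h1 h2
  · -- full ellipse case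
    have h4 : 4*α^2*r^2 ≤ 1 - α^2 := hcond.mp h1
    have hα1' : α < 1 := by
      by_contra hcon
      push_neg at hcon
      nlinarith [mul_pos (mul_pos (by norm_num : (0:ℝ)<4) (by nlinarith : (0:ℝ) < α^2)) (by positivity : (0:ℝ) < r^2)]
    have hβpos : 0 < β := Real.sqrt_pos.mpr (by nlinarith)
    have h2ar : 2*α*r ≤ β := by
      have : (2*α*r)^2 ≤ β^2 := by rw [hβ2]; nlinarith
      nlinarith [mul_nonneg (mul_nonneg (by norm_num : (0:ℝ) ≤ 2) hα0) hr.le]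
    set a := r / β with hadef
    have ha0 : 0 ≤ a := div_nonneg hr.le hβ0
    have hba : β * a = r := by rw [hadef]; field_simp
    have hstep : (∫⁻ s in I, ENNReal.ofReal (2 * Real.sqrt (r^2 - (β*s)^2)))
        = ∫⁻ s in Set.Icc (-a) a, ENNReal.ofReal (2 * Real.sqrt (r^2 - (β*s)^2)) := by
      rw [← lintegral_indicator hImeas, ← lintegral_indicator measurableSet_Icc]
      apply lintegral_congr
      intro s
      by_cases hsJ : s ∈ Set.Icc (-a) a
      · rw [Set.indicator_of_mem hsJ, Set.indicator_of_mem]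
        show α * s ∈ Set.Icc (-(1:ℝ)/2) (1/2)
        obtain ⟨hs1, hs2⟩ := hsJ
        constructor
        · nlinarith [mul_le_mul_of_nonneg_left hs1 hα0]
        · nlinarith [mul_le_mul_of_nonneg_left hs2 hα0]
      · rw [Set.indicator_of_notMem hsJ]
        have hs : a < |s| := by
          by_contra hcon
          push_neg at hcon
          exact hsJ (abs_le.mp hcon)
        have hneg : r^2 - (β*s)^2 ≤ 0 := by
          have : (β*a)^2 ≤ (β*|s|)^2 := by nlinarith [abs_nonneg s, mul_le_mul_of_nonneg_left hs.le hβ0]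
          rw [hba] at this
          nlinarith [sq_abs s]
        have hz : Real.sqrt (r^2 - (β*s)^2) = 0 := Real.sqrt_eq_zero_of_nonpos hneg
        by_cases hsI : s ∈ I
        · rw [Set.indicator_of_mem hsI]
          simp [hz]
        · rw [Set.indicator_of_notMem hsI]
    rw [hstep, lint_to_int _ hfc hf0 _ _ (by linarith)]
    rw [integral_key β r a hβpos hr ha0 (le_of_eq hba)]
    rw [hba, sub_self, Real.sqrt_zero, div_self hr.ne', Real.arcsin_one]
    congr 1
    ring
  · -- truncated ellipse case
    have h4 : 1 - α^2 < 4*α^2*r^2 := lt_of_not_ge (fun hc => h1 (hcond.mpr hc))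
    have hαpos : 0 < α := by
      rcases lt_or_eq_of_le hα0 with h | h
      · exact h
      · exfalso; apply h1; rw [← h]; positivity
    have hβpos : 0 < β := Real.sqrt_pos.mpr (by nlinarith)
    have hblt : β < 2*α*r := by
      have hsq : β^2 < (2*α*r)^2 := by rw [hβ2]; nlinarith
      nlinarith [mul_pos (mul_pos (by norm_num : (0:ℝ) < 2) hαpos) hr]
    set b := 1/(2*α) with hbdef
    have hb0 : 0 ≤ b := by positivity
    have hbc : β * b ≤ r := by
      rw [hbdef]
      rw [mul_one_div, div_le_iff₀ (by positivity)]
      linarith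
    have hIeq : I = Set.Icc (-b) b := by
      ext s
      simp only [hIdef, Set.mem_setOf_eq, Set.mem_Icc]
      have hinv : α * b = 1/2 := by rw [hbdef]; field_simp
      constructor
      · rintro ⟨hs1, hs2⟩
        constructor <;> nlinarith
      · rintro ⟨hs1, hs2⟩
        constructor <;> nlinarith [mul_le_mul_of_nonneg_left hs1 hαpos.le,
          mul_le_mul_of_nonneg_left hs2 hαpos.le]
    rw [hIeq, lint_to_int _ hfc hf0 _ _ (by linarith)]
    rw [integral_key β r b hβpos hr hb0 hbc]
    congr 1
    have e1 : β * b / r = β / (2*α*r) := by rw [hbdef]; field_simp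
    rw [e1]
    have e2 : 2 * b * Real.sqrt (r^2 - (β*b)^2) = r / α * Real.sqrt (1 - (1-α^2)/(4*α^2*r^2)) := by
      have h5 : r^2 - (β*b)^2 = r^2 * (1 - (1-α^2)/(4*α^2*r^2)) := by
        rw [hbdef, ← hβ2]; field_simp; ring
      rw [h5, Real.sqrt_mul (sq_nonneg r), Real.sqrt_sq hr.le, hbdef]
      ring
    rw [e2]
    have e3 : 2 * (r^2/β) = 2 * r^2 / β := by ring
    rw [e3]
  · -- α = 1 case
    have hα1' : α = 1 := le_antisymm hα1 (not_lt.mp h2)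
    have hβz : β = 0 := by
      rw [hβdef, hα1']; norm_num
    have hIeq : I = Set.Icc (-(1:ℝ)/2) (1/2) := by
      ext s
      simp only [hIdef, Set.mem_setOf_eq, hα1', one_mul]
    have hconst : ∀ s : ℝ, (2 : ℝ) * Real.sqrt (r^2 - (β*s)^2) = 2*r := by
      intro s
      rw [hβz]
      simp [Real.sqrt_sq hr.le]
    calc ∫⁻ s in I, ENNReal.ofReal (2 * Real.sqrt (r^2 - (β*s)^2))
        = ∫⁻ _ in I, ENNReal.ofReal (2*r) := by
          apply setLIntegral_congr_fun_ae hImeas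
          exact ae_of_all _ fun s _ => by rw [hconst s]
      _ = ENNReal.ofReal (2*r) * volume I := setLIntegral_const _ _
      _ = ENNReal.ofReal (2*r) := by
          rw [hIeq, Real.volume_Icc]
          norm_num
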